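/- Every coloured graph G on n vertices that contains no edge of weight 2 and no BK_3 as a subgraph, and satisfies δ(G) > (2/5)·n, admits a homomorphism to RK_2^-; explicitly, there is a partition V(G) = W_1 ∪ W_2 such that w(x,y) = 0 for any two distinct vertices x, y in the same class. -/
import Mathlib


/-- A coloured graph structure on a weight function: symmetric, `{0,1,2}`-valued,
vanishing on the diagonal. -/
def IsColoured {V : Type*} (w : V → V → ℕ) : Prop :=
  (∀ x y, w x y = w y x) ∧ (∀ x y, w x y ≤ 2) ∧ (∀ x, w x x = 0)

/-- The coloured graph with weight function `f` on `Fin m` is a subgraph of `(V, w)`. -/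
def HasSub {V : Type*} (w : V → V → ℕ) {m : ℕ} (f : Fin m → Fin m → ℕ) : Prop :=
  ∃ φ : Fin m → V, Function.Injective φ ∧ ∀ x y, f x y ≤ w (φ x) (φ y)

/-- The red clique `RK_m`: every edge has weight `2`. -/
def RK (m : ℕ) : Fin m → Fin m → ℕ := fun x y => if x = y then 0 else 2

/-- The blue clique `BK_m`: every edge has weight `1`. -/
def BK (m : ℕ) : Fin m → Fin m → ℕ := fun x y => if x = y then 0 else 1

/-- The coloured graph `G_{t,i}` of order `t - i`: a red clique `RK_i` (the first `i`
vertices) and a blue clique `BK_{t-2i}`, joined by edges of weight `1`. -/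
def Gt (t i : ℕ) : Fin (t - i) → Fin (t - i) → ℕ :=
  fun x y => if x = y then 0 else if x.val < i ∧ y.val < i then 2 else 1

/-- `(V, w)` is `𝓕_t`-free, where `𝓕_t = {G_{t,i} : 1 ≤ i ≤ t/2}`. -/
def FamFree {V : Type*} (w : V → V → ℕ) (t : ℕ) : Prop :=
  ∀ i, 1 ≤ i → 2 * i ≤ t → ¬ HasSub w (Gt t i)


/-- A walk of length `L` from `x` to `y` along relation `A`, encoded as a function. -/
def WalkOn {V : Type*} (A : V → V → Prop) (x y : V) (L : ℕ) (v : ℕ → V) : Prop :=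
  v 0 = x ∧ v L = y ∧ ∀ i, i < L → A (v i) (v (i + 1))

lemma walkOn_refl {V : Type*} (A : V → V → Prop) (x : V) :
    WalkOn A x x 0 (fun _ => x) := ⟨rfl, rfl, fun i h => absurd h (Nat.not_lt_zero i)⟩

lemma walkOn_symm {V : Type*} {A : V → V → Prop} (hA : ∀ a b, A a b → A b a)
    {x y : V} {L : ℕ} {v : ℕ → V} (h : WalkOn A x y L v) :
    WalkOn A y x L (fun i => v (L - i)) := by
  obtain ⟨h0, hL, he⟩ := h
  refine ⟨by simpa using hL, by simpa using h0, fun i hi => ?_⟩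
  show A (v (L - i)) (v (L - (i + 1)))
  have h1 : L - i = (L - (i + 1)) + 1 := by omega
  rw [h1]
  exact hA _ _ (he (L - (i + 1)) (by omega))

lemma walkOn_concat {V : Type*} {A : V → V → Prop}
    {x y z : V} {L1 L2 : ℕ} {v1 v2 : ℕ → V}
    (h1 : WalkOn A x y L1 v1) (h2 : WalkOn A y z L2 v2) :
    WalkOn A x z (L1 + L2) (fun i => if i ≤ L1 then v1 i else v2 (i - L1)) := by
  obtain ⟨h10, h1L, h1e⟩ := h1
  obtain ⟨h20, h2L, h2e⟩ := h2
  have key : ∀ j, L1 ≤ j → (if j ≤ L1 then v1 j else v2 (j - L1)) = v2 (j - L1) := by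
    intro j hj
    rcases Nat.lt_or_ge L1 j with h | h
    · rw [if_neg (by omega)]
    · have : j = L1 := le_antisymm h hj
      subst this
      rw [if_pos le_rfl, Nat.sub_self, h20, h1L]
  refine ⟨by simpa using h10, ?_, ?_⟩
  · show (if L1 + L2 ≤ L1 then v1 (L1+L2) else v2 (L1 + L2 - L1)) = z
    rw [key (L1 + L2) (by omega)]
    simpa using h2L
  · intro i hi
    show A (if i ≤ L1 then v1 i else v2 (i - L1))
        (if i + 1 ≤ L1 then v1 (i + 1) else v2 (i + 1 - L1))
    rcases Nat.lt_or_ge i L1 with h | h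
    · rw [if_pos (show i ≤ L1 by omega), if_pos (show i + 1 ≤ L1 by omega)]
      exact h1e i h
    · rw [key i h, key (i + 1) (by omega)]
      have : i + 1 - L1 = (i - L1) + 1 := by omega
      rw [this]
      exact h2e (i - L1) (by omega)

lemma walkOn_segment {V : Type*} {A : V → V → Prop}
    {x y : V} {L : ℕ} {v : ℕ → V} (h : WalkOn A x y L v)
    {a b : ℕ} (hab : a ≤ b) (hbL : b ≤ L) :
    WalkOn A (v a) (v b) (b - a) (fun i => v (a + i)) := by
  obtain ⟨_, _, he⟩ := h
  refine ⟨by simp, by simp [Nat.add_sub_cancel' hab], fun i hi => ?_⟩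
  show A (v (a + i)) (v (a + (i + 1)))
  have : a + (i + 1) = (a + i) + 1 := by omega
  rw [this]
  exact he (a + i) (by omega)

lemma walkOn_edge {V : Type*} {A : V → V → Prop} {x y : V} (h : A x y) :
    WalkOn A x y 1 (fun i => if i = 0 then x else y) := by
  refine ⟨rfl, rfl, fun i hi => ?_⟩
  interval_cases i
  simpa using h

lemma three_of_card {s : Finset ℕ} (h : 3 ≤ s.card) :
    ∃ a b c, a ∈ s ∧ b ∈ s ∧ c ∈ s ∧ a < b ∧ b < c := by
  have h1 : s.Nonempty := Finset.card_pos.mp (by omega)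
  set a := s.min' h1 with ha_def
  have ha : a ∈ s := s.min'_mem h1
  set s2 := s.erase a with hs2
  have hcard2 : 2 ≤ s2.card := by rw [hs2, Finset.card_erase_of_mem ha]; omega
  have h2 : s2.Nonempty := Finset.card_pos.mp (by omega)
  set b := s2.min' h2 with hb_def
  have hb2 : b ∈ s2 := s2.min'_mem h2
  have hb : b ∈ s := Finset.mem_of_mem_erase hb2
  set s3 := s2.erase b with hs3
  have hcard3 : 1 ≤ s3.card := by rw [hs3, Finset.card_erase_of_mem hb2]; omega
  have h3 : s3.Nonempty := Finset.card_pos.mp (by omega)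
  obtain ⟨c, hc3⟩ := h3
  have hc2 : c ∈ s2 := Finset.mem_of_mem_erase hc3
  have hc : c ∈ s := Finset.mem_of_mem_erase hc2
  refine ⟨a, b, c, ha, hb, hc, ?_, ?_⟩
  · exact lt_of_le_of_ne (s.min'_le b hb) (Ne.symm (Finset.ne_of_mem_erase hb2))
  · exact lt_of_le_of_ne (s2.min'_le c hc2) (Ne.symm (Finset.ne_of_mem_erase hc3))

lemma exists_coloring {V : Type*} (A : V → V → Prop) (hA : ∀ a b, A a b → A b a)
    (hno : ∀ L, Odd L → ∀ (x : V) (v : ℕ → V), ¬ WalkOn A x x L v) :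
    ∃ f : V → Fin 2, ∀ x y, A x y → f x ≠ f y := by
  classical
  letI s : Setoid V := ⟨fun a b => ∃ L v, WalkOn A a b L v,
    ⟨fun a => ⟨0, _, walkOn_refl A a⟩,
     fun h => by
        obtain ⟨L, v, hw⟩ := h
        exact ⟨L, _, walkOn_symm hA hw⟩,
     fun h1 h2 => by
        obtain ⟨L1, v1, hw1⟩ := h1
        obtain ⟨L2, v2, hw2⟩ := h2
        exact ⟨L1 + L2, _, walkOn_concat hw1 hw2⟩⟩⟩
  have hrep : ∀ x : V, ∃ L v, WalkOn A (Quotient.mk s x).out x L v := by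
    intro x
    exact Quotient.mk_out x
  have hrep_eq : ∀ x y : V, A x y → (Quotient.mk s x).out = (Quotient.mk s y).out := by
    intro x y h
    have : (Quotient.mk s x) = Quotient.mk s y :=
      Quotient.sound ⟨1, _, walkOn_edge h⟩
    rw [this]
  refine ⟨fun x => if ∃ L v, WalkOn A (Quotient.mk s x).out x L v ∧ Odd L then 1 else 0, ?_⟩
  intro x y hxy hf
  -- In every case we produce walks of equal parity from the common root to x and y.
  have key : ∃ (L1 L2 : ℕ) (v1 v2 : ℕ → V), WalkOn A (Quotient.mk s x).out x L1 v1 ∧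
      WalkOn A (Quotient.mk s y).out y L2 v2 ∧ L1 % 2 = L2 % 2 := by
    by_cases hx : ∃ L v, WalkOn A (Quotient.mk s x).out x L v ∧ Odd L
    · by_cases hy : ∃ L v, WalkOn A (Quotient.mk s y).out y L v ∧ Odd L
      · obtain ⟨L1, v1, hw1, ho1⟩ := hx
        obtain ⟨L2, v2, hw2, ho2⟩ := hy
        exact ⟨L1, L2, v1, v2, hw1, hw2, by
          rw [Nat.odd_iff] at ho1 ho2; omega⟩
      · simp only [if_pos hx, if_neg hy] at hf
        exact absurd hf (by decide)
    · by_cases hy : ∃ L v, WalkOn A (Quotient.mk s y).out y L v ∧ Odd L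
      · simp only [if_neg hx, if_pos hy] at hf
        exact absurd hf (by decide)
      · obtain ⟨L1, v1, hw1⟩ := hrep x
        obtain ⟨L2, v2, hw2⟩ := hrep y
        have h1 : ¬ Odd L1 := fun h => hx ⟨L1, v1, hw1, h⟩
        have h2 : ¬ Odd L2 := fun h => hy ⟨L2, v2, hw2, h⟩
        rw [Nat.odd_iff] at h1 h2
        exact ⟨L1, L2, v1, v2, hw1, hw2, by omega⟩
  obtain ⟨L1, L2, v1, v2, hw1, hw2, hpar⟩ := key
  -- build an odd closed walk at the root
  have hroot : (Quotient.mk s y).out = (Quotient.mk s x).out := (hrep_eq x y hxy).symm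
  have hw2' := walkOn_symm hA hw2
  rw [hroot] at hw2'
  have hedge := walkOn_edge hxy
  have hclosed := walkOn_concat hw1 (walkOn_concat hedge hw2')
  exact hno (L1 + (1 + L2)) (by rw [Nat.odd_iff]; omega) _ _ hclosed

/-- If a coloured graph contains no edge of weight `2` and no `BK_3`, and has minimum
degree greater than `(2/5)·n`, then it admits a homomorphism to `RK_2^-`, i.e. a
partition into two classes all of whose internal edges have weight `0`. -/
theorem small_case {V : Type*} [Fintype V]
    (w : V → V → ℕ) (hG : IsColoured w)
    (hnored : ∀ x y : V, w x y ≠ 2)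
    (hBK3 : ¬ HasSub w (BK 3))
    (hdeg : ∀ x : V, (2 / 5 : ℝ) * (Fintype.card V : ℝ) < ∑ y : V, (w x y : ℝ)) :
    ∃ f : V → Fin 2, ∀ x y : V, x ≠ y → f x = f y → w x y = 0 := by
  classical
  by_contra hcon
  have hw1 : ∀ x y : V, w x y ≤ 1 := fun x y => by
    have h1 := hG.2.1 x y; have h2 := hnored x y; omega
  set A : V → V → Prop := fun x y => w x y = 1 with hA_def
  have hAs : ∀ a b : V, A a b → A b a := by
    intro a b h
    show w b a = 1
    rw [hG.1 b a]
    exact h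
  -- there must exist an odd closed walk
  rcases Classical.em (∃ L, Odd L ∧ ∃ (x : V) (v : ℕ → V), WalkOn A x x L v) with hodd | hno
  swap
  · apply hcon
    obtain ⟨f, hfp⟩ := exists_coloring A hAs
      (fun L hL x v hw => hno ⟨L, hL, x, v, hw⟩)
    refine ⟨f, fun x y hne hf => ?_⟩
    by_contra h
    have hAxy : A x y := by
      show w x y = 1
      have := hw1 x y
      omega
    exact hfp x y hAxy hf
  -- take a shortest odd closed walk
  set L0 := Nat.find hodd with hL0_def
  obtain ⟨hoddL, x, v, hwalk⟩ := Nat.find_spec hodd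
  rw [← hL0_def] at hoddL hwalk
  have hmin : ∀ L', L' < L0 → ¬(Odd L' ∧ ∃ (x : V) (v : ℕ → V), WalkOn A x x L' v) :=
    fun L' h => Nat.find_min hodd h
  have hLpar : L0 % 2 = 1 := Nat.odd_iff.mp hoddL
  have hne1 : L0 ≠ 1 := by
    intro h
    have ha : w (v 0) (v 1) = 1 := hwalk.2.2 0 (by omega)
    have hL := hwalk.2.1
    rw [h] at hL
    rw [hwalk.1, hL] at ha
    have := hG.2.2 x
    omega
  have hne3 : L0 ≠ 3 := by
    intro h
    apply hBK3
    have e01 : w (v 0) (v 1) = 1 := hwalk.2.2 0 (by omega)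
    have e12 : w (v 1) (v 2) = 1 := hwalk.2.2 1 (by omega)
    have e23 : w (v 2) (v 3) = 1 := hwalk.2.2 2 (by omega)
    have hv3 : v 3 = v 0 := by
      have h1 := hwalk.2.1
      rw [h] at h1
      rw [h1, hwalk.1]
    have e20 : w (v 2) (v 0) = 1 := by rw [← hv3]; exact e23
    have e10 : w (v 1) (v 0) = 1 := by rw [hG.1]; exact e01
    have e21 : w (v 2) (v 1) = 1 := by rw [hG.1]; exact e12
    have e02 : w (v 0) (v 2) = 1 := by rw [hG.1]; exact e20
    have d01 : v 0 ≠ v 1 := by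
      intro hq; rw [hq] at e01; have := hG.2.2 (v 1); omega
    have d12 : v 1 ≠ v 2 := by
      intro hq; rw [hq] at e12; have := hG.2.2 (v 2); omega
    have d02 : v 0 ≠ v 2 := by
      intro hq; rw [hq] at e02; have := hG.2.2 (v 2); omega
    have hdist : ∀ i j : ℕ, i < 3 → j < 3 → i ≠ j → v i ≠ v j := by
      intro i j hi hj hij
      interval_cases i <;> interval_cases j <;>
        first
          | omega
          | exact d01 | exact d12 | exact d02
          | exact d01.symm | exact d12.symm | exact d02.symm
    have hge : ∀ i j : ℕ, i < 3 → j < 3 → i ≠ j → 1 ≤ w (v i) (v j) := by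
      intro i j hi hj hij
      interval_cases i <;> interval_cases j <;> omega
    refine ⟨fun i => v i.val, ?_, ?_⟩
    · intro a b hab
      by_contra hne
      exact hdist a.val b.val a.isLt b.isLt (fun hq => hne (Fin.ext hq)) hab
    · intro a b
      by_cases hab : a = b
      · subst hab
        simp [BK]
      · have : BK 3 a b = 1 := by simp [BK, hab]
        rw [this]
        exact hge a.val b.val a.isLt b.isLt (fun hq => hab (Fin.ext hq))
  have hL5 : 5 ≤ L0 := by omega
  -- key lemma: constraints on two neighbours of a vertex among the walk positions
  have pair : ∀ (y : V) (a b : ℕ), a < b → b < L0 → w y (v a) = 1 → w y (v b) = 1 →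
      ((b - a) % 2 = 1 → L0 ≤ b - a + 2) ∧ ((b - a) % 2 = 0 → b - a ≤ 2) := by
    intro y a b hab hbL ha hb
    constructor
    · intro hodd'
      by_contra hlt
      push_neg at hlt
      have w1 := walkOn_edge (show A y (v a) from ha)
      have w2 := walkOn_segment hwalk (le_of_lt hab) (by omega)
      have w3 := walkOn_edge (show A (v b) y from hAs _ _ hb)
      have hcl := walkOn_concat w1 (walkOn_concat w2 w3)
      exact hmin (1 + (b - a + 1)) (by omega)
        ⟨by rw [Nat.odd_iff]; omega, y, _, hcl⟩
    · intro heven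
      by_contra hgt
      push_neg at hgt
      have w1 := walkOn_edge (show A y (v b) from hb)
      have w2 := walkOn_segment hwalk (le_of_lt hbL) (le_refl L0)
      have hvL : v L0 = v 0 := by rw [hwalk.2.1, hwalk.1]
      rw [hvL] at w2
      have w3 := walkOn_segment hwalk (Nat.zero_le a) (by omega)
      have w4 := walkOn_edge (show A (v a) y from hAs _ _ ha)
      have hcl := walkOn_concat w1 (walkOn_concat w2 (walkOn_concat w3 w4))
      exact hmin (1 + ((L0 - b) + ((a - 0) + 1))) (by omega)
        ⟨by rw [Nat.odd_iff]; omega, y, _, hcl⟩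
  -- every vertex has at most two neighbours among the walk positions
  have hsum_le : ∀ y : V, (∑ i ∈ Finset.range L0, w y (v i)) ≤ 2 := by
    intro y
    by_contra hgt
    push_neg at hgt
    have hcard : 3 ≤ ((Finset.range L0).filter (fun i => w y (v i) = 1)).card := by
      have heq : (∑ i ∈ Finset.range L0, w y (v i))
          = ((Finset.range L0).filter (fun i => w y (v i) = 1)).card := by
        rw [Finset.card_filter]
        refine Finset.sum_congr rfl fun i _ => ?_
        have := hw1 y (v i)
        split_ifs with hi <;> omega
      omega
    obtain ⟨a, b, c, ha, hb, hc, hab, hbc⟩ := three_of_card hcard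
    simp only [Finset.mem_filter, Finset.mem_range] at ha hb hc
    have p1 := pair y a b hab hb.1 ha.2 hb.2
    have p2 := pair y b c hbc hc.1 hb.2 hc.2
    have p3 := pair y a c (lt_trans hab hbc) hc.1 ha.2 hc.2
    omega
  -- double counting
  have hub : (∑ i ∈ Finset.range L0, ∑ z : V, w (v i) z) ≤ 2 * Fintype.card V := by
    have hswap : (∑ i ∈ Finset.range L0, ∑ z : V, w (v i) z)
        = ∑ z : V, ∑ i ∈ Finset.range L0, w z (v i) := by
      rw [Finset.sum_comm]
      exact Finset.sum_congr rfl fun z _ => Finset.sum_congr rfl fun i _ => hG.1 _ _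
    rw [hswap]
    calc ∑ z : V, ∑ i ∈ Finset.range L0, w z (v i) ≤ ∑ _z : V, 2 :=
          Finset.sum_le_sum fun z _ => hsum_le z
      _ = 2 * Fintype.card V := by
          rw [Finset.sum_const]
          simp [mul_comm]
  have hlb : (L0 : ℝ) * ((2 / 5 : ℝ) * (Fintype.card V : ℝ))
      < ∑ i ∈ Finset.range L0, ∑ z : V, (w (v i) z : ℝ) := by
    have hne : (Finset.range L0).Nonempty := ⟨0, Finset.mem_range.mpr (by omega)⟩
    have := Finset.sum_lt_sum_of_nonempty hne
      (f := fun _ : ℕ => (2 / 5 : ℝ) * (Fintype.card V : ℝ)) (fun i _ => hdeg (v i))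
    simpa [Finset.sum_const, Finset.card_range, nsmul_eq_mul, mul_assoc] using this
  have hcast : (∑ i ∈ Finset.range L0, ∑ z : V, (w (v i) z : ℝ))
      = ((∑ i ∈ Finset.range L0, ∑ z : V, w (v i) z : ℕ) : ℝ) := by
    push_cast
    ring
  have hub' : ((∑ i ∈ Finset.range L0, ∑ z : V, w (v i) z : ℕ) : ℝ)
      ≤ 2 * (Fintype.card V : ℝ) := by exact_mod_cast hub
  have hn0 : (0 : ℝ) ≤ (Fintype.card V : ℝ) := Nat.cast_nonneg _
  have hL5' : (5 : ℝ) ≤ (L0 : ℝ) := by exact_mod_cast hL5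
  rw [hcast] at hlb
  nlinarith [mul_nonneg (sub_nonneg.mpr hL5') hn0]
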